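/- In two-way r-bootstrap percolation on T_L^d (2 ≤ r ≤ d, L sufficiently large), there exists a constant T = T(d,r) (independent of L) such that any initial configuration with fewer than 2^{r-1} black nodes becomes fully white within T rounds. -/

import Mathlib

open scoped Classical ENNReal
open MeasureTheory Filter

/-- Vertices of the `d`-dimensional torus with side length `L`. -/
abbrev TorusV (d L : ℕ) := Fin d → ZMod L

/-- The `d`-dimensional torus graph `T_L^d`: two nodes are adjacent iff they differ
by `±1 (mod L)` in exactly one coordinate. -/
def torusGraph (d L : ℕ) : SimpleGraph (TorusV d L) where
  Adj v u := v ≠ u ∧ ∃ j, (u j = v j + 1 ∨ u j = v j - 1) ∧ ∀ k, k ≠ j → u k = v k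
  symm := ⟨by
    rintro v u ⟨hne, j, hj, hk⟩
    refine ⟨hne.symm, j, ?_, fun k hkj => (hk k hkj).symm⟩
    rcases hj with h | h
    · right; rw [h]; ring
    · left; rw [h]; ring⟩
  loopless := ⟨by rintro v ⟨hne, -⟩; exact hne rfl⟩

/-- One round of two-way `r`-bootstrap percolation on a finite graph:
a node is black in the next round iff it has at least `r` black neighbors. -/
noncomputable def gStep {V : Type*} [Fintype V] (G : SimpleGraph V) (r : ℕ)
    (C : V → Bool) : V → Bool :=
  fun v => decide (r ≤ (Finset.univ.filter (fun u => G.Adj v u ∧ C u = true)).card)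

/-- One round of (ordinary) `r`-bootstrap percolation: black nodes stay black, and a white
node becomes black iff it has at least `r` black neighbors. -/
noncomputable def bpStep {V : Type*} [Fintype V] (G : SimpleGraph V) (r : ℕ)
    (C : V → Bool) : V → Bool :=
  fun v => C v || decide (r ≤ (Finset.univ.filter (fun u => G.Adj v u ∧ C u = true)).card)

/-- One round of the majority model: each node adopts the most frequent color among its
neighbors, keeping its own color in case of a tie. -/
noncomputable def majStep {V : Type*} [Fintype V] (G : SimpleGraph V)
    (C : V → Bool) : V → Bool :=
  fun v =>
    let b := (Finset.univ.filter (fun u => G.Adj v u ∧ C u = true)).card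
    let w := (Finset.univ.filter (fun u => G.Adj v u ∧ C u = false)).card
    if w < b then true else if b < w then false else C v

/-- `S` is an `(r,c)`-robust set in two-way `r`-BP: whenever all nodes of `S` have color `c`,
they keep color `c` in all subsequent configurations. (`true` = black, `false` = white.) -/
noncomputable def isRobust {V : Type*} [Fintype V] (G : SimpleGraph V) (r : ℕ) (c : Bool)
    (S : Finset V) : Prop :=
  ∀ C : V → Bool, (∀ v ∈ S, C v = c) → ∀ t, ∀ v ∈ S, (gStep G r)^[t] C v = c

/-- `S` is a b-eternal set in two-way `r`-BP: whenever all nodes of `S` are black, every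
subsequent configuration contains at least one black node. -/
noncomputable def isBEternal {V : Type*} [Fintype V] (G : SimpleGraph V) (r : ℕ)
    (S : Finset V) : Prop :=
  ∀ C : V → Bool, (∀ v ∈ S, C v = true) → ∀ t, ∃ v, (gStep G r)^[t] C v = true

/-- The node of a hyper-square at start `i` obtained by incrementing the coordinates in `S`. -/
def hsNode {d L : ℕ} (i : TorusV d L) (S : Finset (Fin d)) : TorusV d L :=
  fun j => if j ∈ S then i j + 1 else i j

/-- The hyper-square with starting node `i` and coordinate set `J` (an `J.card`-dimensional
hyper-square). -/
noncomputable def hyperSquare {d L : ℕ} (i : TorusV d L) (J : Finset (Fin d)) :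
    Finset (TorusV d L) :=
  J.powerset.image (hsNode i)

/-- The even-part of the hyper-square: nodes differing from the start in an even number of
coordinates. -/
noncomputable def evenPart {d L : ℕ} (i : TorusV d L) (J : Finset (Fin d)) :
    Finset (TorusV d L) :=
  (J.powerset.filter (fun S => Even S.card)).image (hsNode i)

/-- The odd-part of the hyper-square: nodes differing from the start in an odd number of
coordinates. -/
noncomputable def oddPart {d L : ℕ} (i : TorusV d L) (J : Finset (Fin d)) :
    Finset (TorusV d L) :=
  (J.powerset.filter (fun S => Odd S.card)).image (hsNode i)

/-- The hyper-rectangle of size `l 0 × ⋯ × l (d-1)` starting at node `i`. -/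
noncomputable def hyperRect {d L : ℕ} [NeZero L] (i : TorusV d L) (l : Fin d → ℕ) :
    Finset (TorusV d L) :=
  Finset.univ.filter (fun v => ∀ j, ∃ m : ℕ, m ≤ l j ∧ v j = i j + (m : ZMod L))

/-- The parity of a hyper-square of the tiling: parity of the sum of the last `d - r`
coordinates of its starting node. -/
def tpar (d L r : ℕ) (i : TorusV d L) : ℕ :=
  (∑ j ∈ Finset.univ.filter (fun j : Fin d => r ≤ (j : ℕ)), (i j).val) % 2

/-- A hyper-square of the tiling (start `i`, coordinate set = first `r` coordinates) is
occupied: its even-part is fully black if its parity is even, and its odd-part is fully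
black if its parity is odd. -/
noncomputable def occupiedHS (d L r : ℕ) (i : TorusV d L) (C : TorusV d L → Bool) : Prop :=
  if tpar d L r i = 0 then
    ∀ v ∈ evenPart i (Finset.univ.filter (fun j : Fin d => (j : ℕ) < r)), C v = true
  else
    ∀ v ∈ oddPart i (Finset.univ.filter (fun j : Fin d => (j : ℕ) < r)), C v = true

/-- The Bernoulli measure on `Bool` with success (black) probability `p` (clamped to `1`). -/
noncomputable def bernoulliMeasure (p : ℝ≥0∞) : Measure Bool :=
  (PMF.bernoulli (min p 1).toNNReal
    ((ENNReal.toNNReal_mono ENNReal.one_ne_top (min_le_right p 1)).trans_eq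
      ENNReal.toNNReal_one)).toMeasure

/-- The product measure on configurations: each node is independently black with
probability `p`. -/
noncomputable def productMeasure (V : Type*) [Fintype V] (p : ℝ≥0∞) :
    Measure (V → Bool) :=
  Measure.pi (fun _ : V => bernoulliMeasure p)

section TwoWayAux

variable {V : Type*} [Fintype V]

/-- number of neighbors of `v` outside `H` -/
noncomputable def outCnt (G : SimpleGraph V) (H : Finset V) (v : V) : ℕ :=
  (Finset.univ.filter (fun u => G.Adj v u ∧ u ∉ H)).card

/-- modified two-way BP step inside the "box" `H`, where neighbors outside `H`
are treated as permanently black. -/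
noncomputable def mStep (G : SimpleGraph V) (r : ℕ) (H : Finset V) (C : V → Bool) :
    V → Bool :=
  fun v => decide (r ≤ outCnt G H v + (H.filter (fun u => G.Adj v u ∧ C u = true)).card)

lemma mStep_true_iff {G : SimpleGraph V} {r : ℕ} {H : Finset V} {C : V → Bool} {v : V} :
    mStep G r H C v = true ↔
      r ≤ outCnt G H v + (H.filter (fun u => G.Adj v u ∧ C u = true)).card := by
  simp [mStep]

lemma mStep_univ (G : SimpleGraph V) (r : ℕ) :
    mStep G r Finset.univ = gStep G r := by
  funext C v
  have h0 : outCnt G Finset.univ v = 0 := by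
    simp [outCnt]
  simp [mStep, gStep, h0]

lemma mStep_mono {G : SimpleGraph V} {r : ℕ} {H : Finset V} {C C' : V → Bool}
    (h : ∀ u ∈ H, C u = true → C' u = true) {v : V} (hv : mStep G r H C v = true) :
    mStep G r H C' v = true := by
  rw [mStep_true_iff] at hv ⊢
  refine le_trans hv (Nat.add_le_add_left (Finset.card_le_card ?_) _)
  intro u hu
  simp only [Finset.mem_filter] at hu ⊢
  exact ⟨hu.1, hu.2.1, h u hu.1 hu.2.2⟩

lemma mStep_dominate {G : SimpleGraph V} {r : ℕ} {H' H : Finset V} (hsub : H' ⊆ H)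
    {C : V → Bool} {v : V} (hv : mStep G r H C v = true) : mStep G r H' C v = true := by
  rw [mStep_true_iff] at hv ⊢
  set Y := H.filter (fun u => G.Adj v u ∧ u ∉ H') with hY
  have hout : outCnt G H v + Y.card ≤ outCnt G H' v := by
    simp only [outCnt]
    rw [← Finset.card_union_of_disjoint]
    · refine Finset.card_le_card ?_
      intro u hu
      simp only [Finset.mem_union, Finset.mem_filter, Finset.mem_univ, true_and, hY] at hu ⊢
      rcases hu with ⟨ha, hn⟩ | ⟨hH, ha, hn⟩
      · exact ⟨ha, fun h' => hn (hsub h')⟩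
      · exact ⟨ha, hn⟩
    · rw [Finset.disjoint_left]
      intro u hu hu'
      simp only [Finset.mem_filter, Finset.mem_univ, true_and, hY] at hu hu'
      exact hu.2 hu'.1
  have hin : (H.filter (fun u => G.Adj v u ∧ C u = true)).card ≤
      (H'.filter (fun u => G.Adj v u ∧ C u = true)).card + Y.card := by
    refine le_trans (Finset.card_le_card (?_ :
      H.filter (fun u => G.Adj v u ∧ C u = true) ⊆
        H'.filter (fun u => G.Adj v u ∧ C u = true) ∪ Y)) (Finset.card_union_le _ _)
    intro u hu
    simp only [Finset.mem_filter, Finset.mem_union, hY] at hu ⊢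
    by_cases h' : u ∈ H'
    · exact Or.inl ⟨h', hu.2⟩
    · exact Or.inr ⟨hu.1, hu.2.1, h'⟩
  omega

lemma mStep_dominate_iter {G : SimpleGraph V} {r : ℕ} {H' H : Finset V} (hsub : H' ⊆ H)
    (C : V → Bool) :
    ∀ t, ∀ v ∈ H', (mStep G r H)^[t] C v = true → (mStep G r H')^[t] C v = true := by
  intro t
  induction t with
  | zero => intro v _ h; simpa using h
  | succ t ih =>
    intro v hv hvt
    rw [Function.iterate_succ_apply'] at hvt ⊢
    exact mStep_mono (fun u hu h => ih u hu h) (mStep_dominate hsub hvt)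

/-- if the opposite-side neighbor is always unique, cutting increases out-count by ≤ 1 -/
lemma outCnt_filter_le {G : SimpleGraph V} {H : Finset V} {Q : V → Prop} [DecidablePred Q]
    (hQ : ∀ w x y : V, G.Adj w x → G.Adj w y → ¬(Q w ↔ Q x) → ¬(Q w ↔ Q y) → x = y)
    {w : V} (hw : w ∈ H.filter Q) : outCnt G (H.filter Q) w ≤ outCnt G H w + 1 := by
  simp only [Finset.mem_filter] at hw
  have hsub : Finset.univ.filter (fun u => G.Adj w u ∧ u ∉ H.filter Q) ⊆
      Finset.univ.filter (fun u => G.Adj w u ∧ u ∉ H) ∪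
        H.filter (fun u => G.Adj w u ∧ ¬ Q u) := by
    intro u hu
    simp only [Finset.mem_filter, Finset.mem_union, Finset.mem_univ, true_and] at hu ⊢
    by_cases h' : u ∈ H
    · refine Or.inr ⟨h', hu.1, fun hq => hu.2 ⟨h', hq⟩⟩
    · exact Or.inl ⟨hu.1, h'⟩
  have hone : (H.filter (fun u => G.Adj w u ∧ ¬ Q u)).card ≤ 1 := by
    rw [Finset.card_le_one]
    intro x hx y hy
    simp only [Finset.mem_filter] at hx hy
    exact hQ w x y hx.2.1 hy.2.1 (by tauto) (by tauto)
  calc outCnt G (H.filter Q) w ≤ _ := Finset.card_le_card hsub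
    _ ≤ _ + _ := Finset.card_union_le _ _
    _ ≤ outCnt G H w + 1 := by exact Nat.add_le_add_left hone _

end TwoWayAux

section CutLemma

set_option maxHeartbeats 1000000 in
lemma exists_cut (d L : ℕ) [NeZero L] (h1 : (1 : ZMod L) ≠ 0) (h2 : (2 : ZMod L) ≠ 0)
    (h3 : (3 : ZMod L) ≠ 0) {v u1 u2 : TorusV d L}
    (ha1 : (torusGraph d L).Adj v u1) (ha2 : (torusGraph d L).Adj v u2) (hne : u1 ≠ u2) :
    ∃ inA : TorusV d L → Prop, inA u1 ∧ ¬ inA u2 ∧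
      ∀ w x y : TorusV d L, (torusGraph d L).Adj w x → (torusGraph d L).Adj w y →
        ¬ (inA w ↔ inA x) → ¬ (inA w ↔ inA y) → x = y := by
  obtain ⟨hne1, j, hj, hk⟩ := ha1
  set a : ZMod L := u1 j with ha
  set δ : ZMod L := u1 j - v j with hδdef
  have haδ : a = v j + δ := by rw [ha, hδdef]; ring
  have hδ : δ = 1 ∨ δ = -1 := by
    rcases hj with h | h
    · left; linear_combination h - haδ
    · right; linear_combination h - haδ
  have hδ0 : δ ≠ 0 := by
    rcases hδ with h | h <;> rw [h]
    · exact h1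
    · intro hc; exact h1 (by linear_combination -hc)
  have hδ2 : δ + δ ≠ 0 := by
    rcases hδ with h | h <;> rw [h] <;> intro hc <;> apply h2
    · linear_combination hc
    · linear_combination -hc
  have h2δ : (1 : ZMod L) + 1 ≠ δ ∧ (1 : ZMod L) + 1 ≠ -δ := by
    constructor <;> rcases hδ with h | h <;> rw [h] <;> intro hc
    · exact h1 (by linear_combination hc)
    · exact h3 (by linear_combination hc)
    · exact h3 (by linear_combination hc)
    · exact h1 (by linear_combination hc)
  clear_value a δ
  refine ⟨fun w => w j = a ∨ w j = a + δ, Or.inl ha.symm, ?_, ?_⟩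
  · -- `u2` is not in `A`
    rintro hA
    obtain ⟨hne2, j2, hj2, hk2⟩ := ha2
    by_cases hjj : j2 = j
    · rw [hjj] at hj2 hk2
      rcases hA with hA | hA
      · -- then u2 = u1, contradiction
        apply hne
        funext k
        by_cases hkj : k = j
        · subst hkj; exact (hA.trans ha).symm
        · rw [hk k hkj, ← hk2 k hkj]
      · -- u2 j = a + δ : arithmetic contradiction
        have e : u2 j = v j + δ + δ := by linear_combination hA + haδ
        rcases hj2 with h | h <;> rcases hδ with hd | hd <;> rw [hd] at e
        · exact h1 (by linear_combination h - e)
        · exact h3 (by linear_combination e - h)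
        · exact h3 (by linear_combination h - e)
        · exact h1 (by linear_combination e - h)
    · -- u2 agrees with v in coordinate j
      have e0 : u2 j = v j := hk2 j fun h => hjj h.symm
      rcases hA with hA | hA
      · exact hδ0 (by linear_combination e0 - hA - haδ)
      · exact hδ2 (by linear_combination e0 - hA - haδ)
  · -- cut property
    intro w x y hax hay hwx hwy
    obtain ⟨hnex, jx, hjx, hkx⟩ := hax
    obtain ⟨hney, jy, hjy, hky⟩ := hay
    have hjx' : jx = j := by
      by_contra hc
      refine hwx ?_
      show (w j = a ∨ w j = a + δ) ↔ (x j = a ∨ x j = a + δ)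
      rw [hkx j fun h => hc h.symm]
    have hjy' : jy = j := by
      by_contra hc
      refine hwy ?_
      show (w j = a ∨ w j = a + δ) ↔ (y j = a ∨ y j = a + δ)
      rw [hky j fun h => hc h.symm]
    rw [hjx'] at hjx hkx
    rw [hjy'] at hjy hky
    have key : ∀ p q : ZMod L, p = w j + 1 → q = w j - 1 →
        ¬((w j = a ∨ w j = a + δ) ↔ (p = a ∨ p = a + δ)) →
        ¬((w j = a ∨ w j = a + δ) ↔ (q = a ∨ q = a + δ)) → False := by
      intro p q hp hq hwp hwq
      by_cases hw : w j = a ∨ w j = a + δ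
      · rcases hw with hw | hw <;> rcases hδ with hd | hd
        · exact hwp (iff_of_true (Or.inl hw) (Or.inr (by linear_combination hp + hw - hd)))
        · exact hwq (iff_of_true (Or.inl hw) (Or.inr (by linear_combination hq + hw - hd)))
        · exact hwq (iff_of_true (Or.inr hw) (Or.inl (by linear_combination hq + hw + hd)))
        · exact hwp (iff_of_true (Or.inr hw) (Or.inl (by linear_combination hp + hw + hd)))
      · have hp' : p = a ∨ p = a + δ := by
          by_contra hB; exact hwp (iff_of_false hw hB)
        have hq' : q = a ∨ q = a + δ := by
          by_contra hB; exact hwq (iff_of_false hw hB)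
        rcases hp' with e1 | e1 <;> rcases hq' with e2 | e2
        · exact h2 (by linear_combination hq - hp + e1 - e2)
        · exact h2δ.2 (by linear_combination hq - hp + e1 - e2)
        · exact h2δ.1 (by linear_combination hq - hp + e1 - e2)
        · exact h2 (by linear_combination hq - hp + e1 - e2)
    funext k
    by_cases hkj : k = j
    · subst hkj
      rcases hjx with hx | hx <;> rcases hjy with hy | hy
      · rw [hx, hy]
      · exact (key (x k) (y k) hx hy hwx hwy).elim
      · exact (key (y k) (x k) hy hx hwy hwx).elim
      · rw [hx, hy]
    · rw [hkx k hkj, hky k hkj]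

end CutLemma

section MainCount

lemma main_count (d L r : ℕ) [NeZero L] (h1 : (1 : ZMod L) ≠ 0) (h2 : (2 : ZMod L) ≠ 0)
    (h3 : (3 : ZMod L) ≠ 0) :
    ∀ t (H : Finset (TorusV d L)) (C : TorusV d L → Bool),
      (∀ w ∈ H, outCnt (torusGraph d L) H w + t + 1 ≤ r) →
      ∀ v ∈ H, (mStep (torusGraph d L) r H)^[t] C v = true →
      2 ^ t ≤ (H.filter (fun u => C u = true)).card := by
  intro t
  induction t with
  | zero =>
    intro H C _ v hv hvt
    simp only [Function.iterate_zero, id_eq] at hvt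
    simpa using Finset.card_pos.2 ⟨v, Finset.mem_filter.2 ⟨hv, hvt⟩⟩
  | succ t ih =>
    intro H C hbound v hv hvt
    rw [Function.iterate_succ_apply', mStep_true_iff] at hvt
    have hb := hbound v hv
    have hPcard : 1 <
        (H.filter (fun u => (torusGraph d L).Adj v u ∧
          (mStep (torusGraph d L) r H)^[t] C u = true)).card := by omega
    obtain ⟨u1, hu1, u2, hu2, hu12⟩ := Finset.one_lt_card.1 hPcard
    simp only [Finset.mem_filter] at hu1 hu2
    obtain ⟨inA, hA1, hA2, hcross⟩ := exists_cut d L h1 h2 h3 hu1.2.1 hu2.2.1 hu12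
    have hcrossm : ∀ w x y : TorusV d L, (torusGraph d L).Adj w x → (torusGraph d L).Adj w y →
        ¬((¬ inA w) ↔ (¬ inA x)) → ¬((¬ inA w) ↔ (¬ inA y)) → x = y := fun w x y ax ay hx hy =>
      hcross w x y ax ay (fun h => hx (not_iff_not.2 h)) (fun h => hy (not_iff_not.2 h))
    have hbp : ∀ w ∈ H.filter inA, outCnt (torusGraph d L) (H.filter inA) w + t + 1 ≤ r := by
      intro w hw
      have hb1 := hbound w (Finset.filter_subset _ _ hw)
      have hb2 := outCnt_filter_le hcross hw
      omega
    have hbm : ∀ w ∈ H.filter (fun u => ¬ inA u),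
        outCnt (torusGraph d L) (H.filter (fun u => ¬ inA u)) w + t + 1 ≤ r := by
      intro w hw
      have hb1 := hbound w (Finset.filter_subset _ _ hw)
      have hb2 := outCnt_filter_le hcrossm hw
      omega
    have hm1 : u1 ∈ H.filter inA := Finset.mem_filter.2 ⟨hu1.1, hA1⟩
    have hm2 : u2 ∈ H.filter (fun u => ¬ inA u) := Finset.mem_filter.2 ⟨hu2.1, hA2⟩
    have hd1 := mStep_dominate_iter (Finset.filter_subset inA H) C t u1 hm1 hu1.2.2
    have hd2 := mStep_dominate_iter (Finset.filter_subset (fun u => ¬ inA u) H) C t u2 hm2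
      hu2.2.2
    have c1 := ih (H.filter inA) C hbp u1 hm1 hd1
    have c2 := ih (H.filter (fun u => ¬ inA u)) C hbm u2 hm2 hd2
    have hdisj : Disjoint ((H.filter inA).filter (fun u => C u = true))
        ((H.filter (fun u => ¬ inA u)).filter (fun u => C u = true)) := by
      rw [Finset.disjoint_left]
      intro u hu hu'
      simp only [Finset.mem_filter] at hu hu'
      exact hu'.1.2 hu.1.2
    have hunion : (H.filter inA).filter (fun u => C u = true) ∪
        (H.filter (fun u => ¬ inA u)).filter (fun u => C u = true) ⊆
        H.filter (fun u => C u = true) := by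
      intro u hu
      simp only [Finset.mem_union, Finset.mem_filter] at hu ⊢
      rcases hu with h | h
      · exact ⟨h.1.1, h.2⟩
      · exact ⟨h.1.1, h.2⟩
    have hle := Finset.card_le_card hunion
    rw [Finset.card_union_of_disjoint hdisj] at hle
    have : 2 ^ (t + 1) = 2 ^ t + 2 ^ t := by ring
    omega

end MainCount

theorem stmt_7 (d r : ℕ) (hr : 2 ≤ r) (hrd : r ≤ d) :
    ∃ T L0 : ℕ, ∀ (L : ℕ) [NeZero L], L0 ≤ L →
      ∀ C : TorusV d L → Bool,
        (Finset.univ.filter (fun v => C v = true)).card < 2 ^ (r - 1) →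
        ∃ t ≤ T, ∀ v, (gStep (torusGraph d L) r)^[t] C v = false := by
  refine ⟨r, 5, ?_⟩
  intro L _ hL C hcard
  refine ⟨r - 1, by omega, ?_⟩
  have hker : ∀ k : ℕ, 0 < k → k < L → ((k : ℕ) : ZMod L) ≠ 0 := by
    intro k hk hkL h
    rw [ZMod.natCast_eq_zero_iff] at h
    exact absurd (Nat.le_of_dvd hk h) (by omega)
  have h1 : (1 : ZMod L) ≠ 0 := by simpa using hker 1 (by norm_num) (by omega)
  have h2 : (2 : ZMod L) ≠ 0 := by simpa using hker 2 (by norm_num) (by omega)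
  have h3 : (3 : ZMod L) ≠ 0 := by simpa using hker 3 (by norm_num) (by omega)
  intro v
  by_contra hv
  rw [Bool.not_eq_false] at hv
  have huniv : ∀ w ∈ (Finset.univ : Finset (TorusV d L)),
      outCnt (torusGraph d L) Finset.univ w + (r - 1) + 1 ≤ r := by
    intro w _
    have h0 : outCnt (torusGraph d L) Finset.univ w = 0 := by simp [outCnt]
    omega
  have hv' : (mStep (torusGraph d L) r Finset.univ)^[r - 1] C v = true := by
    rw [mStep_univ]; exact hv
  have hmain := main_count d L r h1 h2 h3 (r - 1) Finset.univ C huniv v (Finset.mem_univ v) hv'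
  omega
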